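/- There exist a constant C₂ > 0 and p₀ > 1 such that for all real p ≥ p₀, writing b_p = 2 log p + 2 d₀ log log p, one has G_h(b_p) ≥ C₂ (log p)^{h/2 − d₀ − 1} / p. -/

import Mathlib

open MeasureTheory ProbabilityTheory Real Filter

/-- `G_h(t) = P(χ²_h ≥ t)`, the survival function of the chi-square distribution with `h`
degrees of freedom, i.e. of the Gamma distribution with shape `h/2` and rate `1/2`. -/
noncomputable def chiSqTail (h : ℕ) (t : ℝ) : ℝ :=
  (ProbabilityTheory.gammaMeasure ((h : ℝ) / 2) (1 / 2) (Set.Ici t)).toReal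

lemma tail_lb (a t : ℝ) (ha : 1 ≤ a) (ht : 1 ≤ t) :
    (1/2 : ℝ) ^ a / Real.Gamma a * t ^ (a-1) * Real.exp (-((t+1)/2)) ≤
      (ProbabilityTheory.gammaMeasure a (1/2) (Set.Ici t)).toReal := by
  have ha0 : (0:ℝ) < a := by linarith
  have hΓ : 0 < Real.Gamma a := Real.Gamma_pos_of_pos ha0
  set c : ℝ := (1/2 : ℝ) ^ a / Real.Gamma a * t ^ (a-1) * Real.exp (-((t+1)/2)) with hc
  have hc0 : 0 ≤ c := by
    apply mul_nonneg (mul_nonneg (div_nonneg (Real.rpow_nonneg (by norm_num) _) hΓ.le)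
      (Real.rpow_nonneg (by linarith) _)) (Real.exp_nonneg _)
  -- pointwise bound on Icc t (t+1)
  have hpt : ∀ x ∈ Set.Icc t (t+1), c ≤ gammaPDFReal a (1/2) x := by
    intro x hx
    obtain ⟨hx1, hx2⟩ := hx
    have hx0 : (0:ℝ) ≤ x := by linarith
    rw [gammaPDFReal, if_pos hx0]
    have h1 : t ^ (a-1) ≤ x ^ (a-1) :=
      Real.rpow_le_rpow (by linarith) hx1 (by linarith)
    have h2 : Real.exp (-((t+1)/2)) ≤ Real.exp (-(1/2 * x)) := by
      apply Real.exp_le_exp.mpr; linarith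
    calc c ≤ (1/2 : ℝ) ^ a / Real.Gamma a * x ^ (a-1) * Real.exp (-(1/2 * x)) := by
            apply mul_le_mul
            · exact mul_le_mul_of_nonneg_left h1
                (div_nonneg (Real.rpow_nonneg (by norm_num) _) hΓ.le)
            · exact h2
            · exact Real.exp_nonneg _
            · exact mul_nonneg (div_nonneg (Real.rpow_nonneg (by norm_num) _) hΓ.le)
                (Real.rpow_nonneg hx0 _)
      _ = _ := rfl
  have hmeas : (ProbabilityTheory.gammaMeasure a (1/2) (Set.Ici t)) ≥ ENNReal.ofReal c := by
    rw [gammaMeasure, withDensity_apply _ measurableSet_Ici]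
    calc ENNReal.ofReal c = ∫⁻ _ in Set.Icc t (t+1), ENNReal.ofReal c := by
            rw [setLIntegral_const]
            simp [Real.volume_Icc]
      _ ≤ ∫⁻ x in Set.Icc t (t+1), gammaPDF a (1/2) x := by
            apply setLIntegral_mono ((measurable_gammaPDFReal a (1/2)).ennreal_ofReal)
            intro x hx
            exact ENNReal.ofReal_le_ofReal (hpt x hx)
      _ ≤ ∫⁻ x in Set.Ici t, gammaPDF a (1/2) x :=
            lintegral_mono_set (fun x hx => hx.1)
  have : IsProbabilityMeasure (gammaMeasure a (1/2)) :=
    isProbabilityMeasure_gammaMeasure ha0 (by norm_num)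
  have hfin : gammaMeasure a (1/2) (Set.Ici t) ≠ ⊤ := measure_ne_top _ _
  have := ENNReal.toReal_mono hfin hmeas
  rwa [ENNReal.toReal_ofReal hc0] at this

/-- Lower chi-square tail bound at `b_p = 2 log p + 2 d₀ log log p`:
`G_h(b_p) ≥ C₂ (log p)^{h/2 − d₀ − 1} / p` for all large `p`. -/
theorem statement2 (h : ℕ) (hh : 2 ≤ h) (d₀ : ℝ) :
    ∃ C₂ > (0 : ℝ), ∃ p₀ > (1 : ℝ), ∀ p : ℝ, p₀ ≤ p →
      C₂ * Real.log p ^ ((h : ℝ) / 2 - d₀ - 1) / p ≤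
        chiSqTail h (2 * Real.log p + 2 * d₀ * Real.log (Real.log p)) := by
  have h2 : (2:ℝ) ≤ (h:ℝ) := by exact_mod_cast hh
  set a : ℝ := (h:ℝ)/2 with ha_def
  have ha : (1:ℝ) ≤ a := by rw [ha_def]; linarith
  have ha0 : 0 < a := by linarith
  have hΓ : 0 < Real.Gamma a := Real.Gamma_pos_of_pos ha0
  have hp₀1 : (1:ℝ) < Real.exp (max 1 (16*d₀^2+1)) := by
    calc (1:ℝ) = Real.exp 0 := Real.exp_zero.symm
      _ < Real.exp (max 1 (16*d₀^2+1)) := Real.exp_lt_exp.mpr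
          (lt_of_lt_of_le one_pos (le_max_left _ _))
  refine ⟨(1/2:ℝ)^a / Real.Gamma a * Real.exp (-(1/2)), by positivity,
    Real.exp (max 1 (16*d₀^2+1)), hp₀1, ?_⟩
  intro p hp
  have hp1 : (1:ℝ) < p := lt_of_lt_of_le hp₀1 hp
  have hp0 : (0:ℝ) < p := lt_trans one_pos hp1
  set L := Real.log p with hL_def
  have hL : max 1 (16*d₀^2+1) ≤ L := by
    have := Real.log_le_log (Real.exp_pos _) hp
    rwa [Real.log_exp] at this
  have hL1 : (1:ℝ) ≤ L := le_trans (le_max_left _ _) hL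
  have hL0 : (0:ℝ) < L := lt_of_lt_of_le one_pos hL1
  have hLd : 16*d₀^2 + 1 ≤ L := le_trans (le_max_right _ _) hL
  have hlogL : 0 ≤ Real.log L := Real.log_nonneg hL1
  have hsq : 4*|d₀| ≤ Real.sqrt L := by
    have h1 : Real.sqrt (16*d₀^2) ≤ Real.sqrt L := Real.sqrt_le_sqrt (by linarith)
    have h16 : Real.sqrt (16*d₀^2) = 4*|d₀| := by
      rw [show (16:ℝ)*d₀^2 = (4*|d₀|)^2 by rw [mul_pow, sq_abs]; ring]
      exact Real.sqrt_sq (by positivity)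
    linarith
  have hlogsq : Real.log L ≤ 2 * Real.sqrt L := by
    have h1 : Real.log (Real.sqrt L) = Real.log L / 2 := Real.log_sqrt hL0.le
    have h2 : Real.log (Real.sqrt L) ≤ Real.sqrt L - 1 :=
      Real.log_le_sub_one_of_pos (Real.sqrt_pos.mpr hL0)
    nlinarith [Real.sqrt_nonneg L]
  have habs : 2*|d₀| * Real.log L ≤ L := by
    calc 2*|d₀| * Real.log L ≤ 2*|d₀| * (2 * Real.sqrt L) := by
          apply mul_le_mul_of_nonneg_left hlogsq (by positivity)
      _ = (4*|d₀|) * Real.sqrt L := by ring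
      _ ≤ Real.sqrt L * Real.sqrt L :=
          mul_le_mul_of_nonneg_right hsq (Real.sqrt_nonneg _)
      _ = L := Real.mul_self_sqrt hL0.le
  set b := 2 * Real.log p + 2 * d₀ * Real.log (Real.log p) with hb_def
  have hb_eq : b = 2*L + 2*d₀*Real.log L := by rw [hb_def, hL_def]
  have hbL : L ≤ b := by
    rw [hb_eq]
    nlinarith [neg_abs_le d₀, abs_nonneg d₀]
  have hb1 : (1:ℝ) ≤ b := le_trans hL1 hbL
  have key := tail_lb a b ha hb1
  have hcs : chiSqTail h b = (ProbabilityTheory.gammaMeasure a (1/2) (Set.Ici b)).toReal := rfl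
  rw [hcs]
  have hexp : Real.exp (-((b+1)/2)) = Real.exp (-(1/2)) * (L ^ (-d₀) / p) := by
    rw [show -((b+1)/2) = -(1/2) + Real.log L * (-d₀) + (-Real.log p) by
      rw [hb_eq]; ring]
    rw [Real.exp_add, Real.exp_add, Real.exp_neg (Real.log p), Real.exp_log hp0,
      ← Real.rpow_def_of_pos hL0]
    ring
  have hLb : L ^ (a-1) ≤ b ^ (a-1) := Real.rpow_le_rpow hL0.le hbL (by linarith)
  have hsplit : L ^ (a - d₀ - 1) = L ^ (a-1) * L ^ (-d₀) := by
    rw [← Real.rpow_add hL0]; ring_nf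
  have hLd0 : (0:ℝ) ≤ L ^ (-d₀) := Real.rpow_nonneg hL0.le _
  calc (1/2:ℝ)^a / Real.Gamma a * Real.exp (-(1/2)) * L ^ (a - d₀ - 1) / p
      = (1/2:ℝ)^a / Real.Gamma a * L ^ (a-1) * (Real.exp (-(1/2)) * (L ^ (-d₀) / p)) := by
        rw [hsplit]; ring
    _ ≤ (1/2:ℝ)^a / Real.Gamma a * b ^ (a-1) * (Real.exp (-(1/2)) * (L ^ (-d₀) / p)) := by
        apply mul_le_mul_of_nonneg_right _ (by positivity)
        exact mul_le_mul_of_nonneg_left hLb (by positivity)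
    _ = (1/2:ℝ)^a / Real.Gamma a * b ^ (a-1) * Real.exp (-((b+1)/2)) := by rw [hexp]
    _ ≤ _ := key
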